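/- Under the setting of the KB distribution theorem, the first-order approximations of the node-level KB statistics for rows i and j, namely X_i = (I-A)^{-1}_{i·} Δ (I-A)^{-1} w and X_j = (I-A)^{-1}_{j·} Δ (I-A)^{-1} w, have covariance Cov(X_i, X_j) = [(I-A)^{-1}w]^⊤ C^{(ij)} (I-A)^{-1}w, where C^{(ij)}_{lk} = (I-A)^{-1}_{i·} Σ_{lk} [(I-A)^{-1}_{j·}]^⊤. -/
import Mathlib


open Matrix MeasureTheory ProbabilityTheory
open scoped ENNReal NNReal

/-- Spectral radius of a real square matrix, via the complex spectrum. -/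
noncomputable def specRad {M : ℕ} (A : Matrix (Fin M) (Fin M) ℝ) : ℝ≥0∞ :=
  spectralRadius ℂ (A.map (algebraMap ℝ ℂ))

/-- Covariance structure of the first-order node-level KB statistics:
Cov(Xᵢ, Xⱼ) = [(I-A)⁻¹w]ᵀ C⁽ⁱʲ⁾ (I-A)⁻¹w with
C⁽ⁱʲ⁾_{lk} = (I-A)⁻¹_{i·} Σ_{lk} [(I-A)⁻¹_{j·}]ᵀ. -/
theorem node_level_KB_covariance {M : ℕ} {Ω : Type*} [MeasurableSpace Ω]
    (P : Measure Ω) [IsProbabilityMeasure P]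
    (A : Matrix (Fin M) (Fin M) ℝ) (hρ : specRad A < 1) (w : Fin M → ℝ)
    (Δ : Ω → Matrix (Fin M) (Fin M) ℝ)
    (hmeas : ∀ p q, Measurable (fun ω => Δ ω p q))
    (hmean : ∀ p q, ∫ ω, Δ ω p q ∂P = 0)
    (hint : ∀ p q r s, Integrable (fun ω => Δ ω p q * Δ ω r s) P)
    (Sig : Fin M → Fin M → Matrix (Fin M) (Fin M) ℝ)
    (hSig : ∀ l k p q, Sig l k p q = ∫ ω, Δ ω p l * Δ ω q k ∂P)
    (i j : Fin M) :
    ∫ ω, (((1 - A)⁻¹ * Δ ω) *ᵥ ((1 - A)⁻¹ *ᵥ w)) i *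
        (((1 - A)⁻¹ * Δ ω) *ᵥ ((1 - A)⁻¹ *ᵥ w)) j ∂P =
      ∑ l, ∑ k, ((1 - A)⁻¹ *ᵥ w) l *
        (∑ p, ∑ q, (1 - A)⁻¹ i p * Sig l k p q * (1 - A)⁻¹ j q) *
          ((1 - A)⁻¹ *ᵥ w) k := by
  set B := (1 - A)⁻¹ with hB
  set v := B *ᵥ w with hv
  have key : ∀ ω, ((B * Δ ω) *ᵥ v) i * ((B * Δ ω) *ᵥ v) j =
      ∑ l, ∑ k, ∑ p, ∑ q,
        (v l * (B i p * B j q) * v k) * (Δ ω p l * Δ ω q k) := by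
    intro ω
    have hi : ∀ r : Fin M, ((B * Δ ω) *ᵥ v) r = ∑ l, (∑ p, B r p * Δ ω p l) * v l := by
      intro r
      simp [Matrix.mulVec, Matrix.mul_apply, dotProduct]
    rw [hi i, hi j, Finset.sum_mul_sum]
    refine Finset.sum_congr rfl fun l _ => Finset.sum_congr rfl fun k _ => ?_
    rw [mul_mul_mul_comm, Finset.sum_mul_sum, Finset.sum_mul]
    refine Finset.sum_congr rfl fun p _ => ?_
    rw [Finset.sum_mul]
    refine Finset.sum_congr rfl fun q _ => ?_
    ring
  simp only [key]
  rw [integral_finset_sum _ fun l _ => by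
    refine (integrable_finset_sum _ fun k _ => ?_)
    refine (integrable_finset_sum _ fun p _ => ?_)
    refine (integrable_finset_sum _ fun q _ => ?_)
    exact (hint p l q k).const_mul _]
  refine Finset.sum_congr rfl fun l _ => ?_
  rw [integral_finset_sum _ fun k _ => by
    refine (integrable_finset_sum _ fun p _ => ?_)
    refine (integrable_finset_sum _ fun q _ => ?_)
    exact (hint p l q k).const_mul _]
  refine Finset.sum_congr rfl fun k _ => ?_
  rw [integral_finset_sum _ fun p _ => by
    refine (integrable_finset_sum _ fun q _ => ?_)
    exact (hint p l q k).const_mul _]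
  rw [Finset.mul_sum, Finset.sum_mul]
  refine Finset.sum_congr rfl fun p _ => ?_
  rw [integral_finset_sum _ fun q _ => (hint p l q k).const_mul _]
  rw [Finset.mul_sum, Finset.sum_mul]
  refine Finset.sum_congr rfl fun q _ => ?_
  rw [integral_const_mul, hSig]
  ring
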